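/- In a sorted finite dataset with an incorrectly ranked adjacent pair at index i (y_i = 1, y_{i+1} = 0), swapping the scores of positions i and i+1 decreases the count of false positives at threshold t exactly when t equals the original score f(x_i) (by exactly one), and leaves the false positive count unchanged at every other threshold equal to some data point's score. -/

import Mathlib

open Finset

/-- Number of false positives at threshold t (strict convention):
the number of negative-labeled samples whose score strictly exceeds t. -/
noncomputable def FPcount {N : ℕ} (y : Fin N → Bool) (f : Fin N → ℝ) (t : ℝ) : ℕ :=
  (univ.filter (fun k : Fin N => y k = false ∧ t < f k)).card

/-- In a sorted dataset of distinct scores with an incorrectly ranked adjacent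
pair at index i (y_i = 1, y_{i+1} = 0), swapping the scores at positions i and i+1 decreases
the false positive count by exactly one at the threshold s_i, and leaves the false positive
count unchanged at every other data point's (original) score threshold. -/
theorem swap_mistake_changes_FP_only_at_own_threshold {N : ℕ}
    (s : Fin N → ℝ) (y : Fin N → Bool)
    (hs : StrictMono s)
    (i : ℕ) (hi : i + 1 < N)
    (hyi : y ⟨i, Nat.lt_of_succ_lt hi⟩ = true)
    (hyi1 : y ⟨i + 1, hi⟩ = false) :
    (FPcount y (s ∘ Equiv.swap ⟨i, Nat.lt_of_succ_lt hi⟩ ⟨i + 1, hi⟩)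
        (s ⟨i, Nat.lt_of_succ_lt hi⟩) + 1
      = FPcount y s (s ⟨i, Nat.lt_of_succ_lt hi⟩)) ∧
    (∀ m : Fin N, (m : ℕ) ≠ i →
      FPcount y (s ∘ Equiv.swap ⟨i, Nat.lt_of_succ_lt hi⟩ ⟨i + 1, hi⟩) (s m)
        = FPcount y s (s m)) := by
  set a : Fin N := ⟨i, Nat.lt_of_succ_lt hi⟩ with ha
  set b : Fin N := ⟨i + 1, hi⟩ with hb
  have hab : a ≠ b := by simp [ha, hb, Fin.ext_iff]
  have hlt : a < b := by simp [ha, hb, Fin.lt_def]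
  have hsab : s a < s b := hs hlt
  have hga : (s ∘ Equiv.swap a b) a = s b := by simp
  have hgb : (s ∘ Equiv.swap a b) b = s a := by simp
  have hgk : ∀ k, k ≠ a → k ≠ b → (s ∘ Equiv.swap a b) k = s k := by
    intro k h1 h2
    simp [Function.comp, Equiv.swap_apply_of_ne_of_ne h1 h2]
  constructor
  · have hset : univ.filter (fun k => y k = false ∧ s a < (s ∘ Equiv.swap a b) k)
        = (univ.filter (fun k : Fin N => y k = false ∧ s a < s k)).erase b := by
      ext k
      simp only [mem_filter, mem_erase, mem_univ, true_and]
      constructor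
      · rintro ⟨h1, h2⟩
        rcases eq_or_ne k b with rfl | hkb
        · rw [hgb] at h2; exact absurd h2 (lt_irrefl _)
        · rcases eq_or_ne k a with rfl | hka
          · rw [hyi] at h1; simp at h1
          · rw [hgk k hka hkb] at h2; exact ⟨hkb, h1, h2⟩
      · rintro ⟨hkb, h1, h2⟩
        rcases eq_or_ne k a with rfl | hka
        · rw [hyi] at h1; simp at h1
        · refine ⟨h1, ?_⟩
          simp only [Function.comp_apply, Equiv.swap_apply_of_ne_of_ne hka hkb]
          exact h2
    have hbmem : b ∈ univ.filter (fun k : Fin N => y k = false ∧ s a < s k) := by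
      exact mem_filter.mpr ⟨mem_univ _, hyi1, hsab⟩
    unfold FPcount
    rw [hset, Finset.card_erase_of_mem hbmem]
    have : 0 < (univ.filter (fun k : Fin N => y k = false ∧ s a < s k)).card :=
      Finset.card_pos.mpr ⟨b, hbmem⟩
    omega
  · intro m hm
    have key : (s m < s a) ↔ (s m < s b) := by
      rw [hs.lt_iff_lt, hs.lt_iff_lt]
      simp only [Fin.lt_def, ha, hb]
      omega
    unfold FPcount
    congr 1
    ext k
    simp only [mem_filter, mem_univ, true_and]
    rcases eq_or_ne k a with rfl | hka
    · rw [hga, key]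
    · rcases eq_or_ne k b with rfl | hkb
      · rw [hgb, key]
      · rw [hgk k hka hkb]
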